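/- Let P be a ccc preorder and Q ⊆ P. Then Q is Fr-linked if and only if Q is leaf-linked, where Fr-linkedness is rendered combinatorially by the standard predensity translation of the forcing clause: Q is Fr-linked iff for every sequence ⟨p_n : n ∈ ω⟩ of elements of Q there exists q ∈ P such that for every r ≤ q and every m ∈ ω there is n ≥ m with r compatible with p_n (this is equivalent to: q forces that {n : p_n ∈ Ġ} is infinite). -/
import Mathlib


universe u

variable {α : Type u} [Preorder α]

/-- `p` and `q` are compatible: some `r` extends both. -/
def Compat (p q : α) : Prop := ∃ r : α, r ≤ p ∧ r ≤ q

/-- `A` is a maximal antichain: pairwise incompatible, and every condition is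
compatible with a member of `A`. -/
def IsMaxAC (A : Set α) : Prop :=
  (∀ p ∈ A, ∀ q ∈ A, p ≠ q → ¬Compat p q) ∧ ∀ p : α, ∃ q ∈ A, Compat p q

/-- `Q` is leaf-linked: for every maximal antichain enumerated as `{p n : n ∈ ω}`
there is `n` such that every `q ∈ Q` is compatible with some `p j`, `j < n`. -/
def LeafLinked (Q : Set α) : Prop :=
  ∀ p : ℕ → α, IsMaxAC (Set.range p) → ∃ n : ℕ, ∀ q ∈ Q, ∃ j < n, Compat q (p j)

/-- `D` is dense in the preorder. -/
def DenseSub (D : Set α) : Prop := ∀ p : α, ∃ q ∈ D, q ≤ p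

/-- The countable chain condition: every antichain is countable. -/
def CCC (α : Type u) [Preorder α] : Prop :=
  ∀ A : Set α, (∀ p ∈ A, ∀ q ∈ A, p ≠ q → ¬Compat p q) → A.Countable

/-- `Q` is Fréchet-linked (combinatorial rendering of the forcing clause):
for every sequence in `Q` there is `q` such that below `q`, cofinally many of
the `p n` are compatible with every extension. -/
def FrLinked (Q : Set α) : Prop :=
  ∀ p : ℕ → α, (∀ n, p n ∈ Q) →
    ∃ q : α, ∀ r ≤ q, ∀ m : ℕ, ∃ n ≥ m, Compat r (p n)

/-- In a ccc preorder, a set is Fr-linked iff it is leaf-linked. -/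
theorem stmt3 {α : Type u} [Preorder α] (hccc : CCC α) (Q : Set α) :
    FrLinked Q ↔ LeafLinked Q := by
  constructor
  · -- FrLinked → LeafLinked
    intro hFr p hmax
    by_contra hno
    push_neg at hno
    -- for each n choose qs n ∈ Q incompatible with all p j, j < n
    choose qs hqsQ hqs using hno
    obtain ⟨q, hq⟩ := hFr qs hqsQ
    -- q is compatible with some p j
    obtain ⟨pj, ⟨j, rfl⟩, r, hr1, hr2⟩ := hmax.2 q
    -- find n ≥ j+1 with r compatible with qs n
    obtain ⟨n, hn, s, hs1, hs2⟩ := hq r hr1 (j + 1)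
    exact hqs n j (by omega) ⟨s, hs2, hs1.trans hr2⟩
  · -- LeafLinked → FrLinked
    intro hLL p hpQ
    by_contra hno
    push_neg at hno
    -- the set of conditions eventually incompatible with p is dense
    set D : Set α := {r | ∃ m : ℕ, ∀ n ≥ m, ¬Compat r (p n)} with hD
    have hdense : DenseSub D := by
      intro q
      obtain ⟨r, hr, m, hm⟩ := hno q
      exact ⟨r, ⟨m, fun n hn => hm n hn⟩, hr⟩
    -- get a maximal antichain inside D by Zorn
    have hzorn : ∃ A, Maximal (fun A : Set α =>
        A ⊆ D ∧ ∀ x ∈ A, ∀ y ∈ A, x ≠ y → ¬Compat x y) A := by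
      apply zorn_subset
      intro c hc hchain
      refine ⟨⋃₀ c, ⟨?_, ?_⟩, fun s hs => Set.subset_sUnion_of_mem hs⟩
      · exact fun x ⟨A, hA, hxA⟩ => (hc hA).1 hxA
      · rintro x ⟨A, hA, hxA⟩ y ⟨B, hB, hyB⟩ hxy
        rcases hchain.total hA hB with h | h
        · exact (hc hB).2 x (h hxA) y hyB hxy
        · exact (hc hA).2 x hxA y (h hyB) hxy
    obtain ⟨A, ⟨hAD, hAanti⟩, hAmax⟩ := hzorn
    -- A is a maximal antichain in α
    have hAm : ∀ q : α, ∃ a ∈ A, Compat q a := by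
      intro q
      obtain ⟨d, hdD, hdq⟩ := hdense q
      by_contra hnone
      push_neg at hnone
      have hdincomp : ∀ a ∈ A, ¬Compat d a := by
        intro a ha ⟨s, hs1, hs2⟩
        exact hnone a ha ⟨s, hs1.trans hdq, hs2⟩
      have hsub : A ⊆ insert d A := Set.subset_insert _ _
      have hmem : insert d A ⊆ D ∧ ∀ x ∈ insert d A, ∀ y ∈ insert d A,
          x ≠ y → ¬Compat x y := by
        constructor
        · exact Set.insert_subset hdD hAD
        · rintro x (rfl | hx) y (rfl | hy) hxy
          · exact absurd rfl hxy
          · exact hdincomp y hy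
          · exact fun ⟨s, h1, h2⟩ => hdincomp x hx ⟨s, h2, h1⟩
          · exact hAanti x hx y hy hxy
      have := hAmax hmem hsub (Set.mem_insert d A)
      exact hdincomp d this ⟨d, le_refl d, le_refl d⟩
    -- A is countable and nonempty
    have hAc : A.Countable := hccc A hAanti
    have hAne : A.Nonempty := by
      obtain ⟨a, ha, _⟩ := hAm (p 0)
      exact ⟨a, ha⟩
    obtain ⟨e, he⟩ := hAc.exists_eq_range hAne
    have hmaxAC : IsMaxAC (Set.range e) := by
      rw [← he]; exact ⟨hAanti, hAm⟩
    obtain ⟨n, hn⟩ := hLL e hmaxAC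
    -- choose bounds for each e j
    have hbound : ∀ j : ℕ, ∃ m : ℕ, ∀ k ≥ m, ¬Compat (e j) (p k) := by
      intro j
      have : e j ∈ A := he ▸ Set.mem_range_self j
      exact hAD this
    choose ms hms using hbound
    set M := Finset.sup (Finset.range n) ms with hM
    obtain ⟨j, hj, s, hs1, hs2⟩ := hn (p M) (hpQ M)
    have : ms j ≤ M := Finset.le_sup (Finset.mem_range.mpr hj)
    exact hms j M this ⟨s, hs2, hs1⟩
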